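/- Let n, t be natural numbers with n ≥ 3t + 1. Suppose X₁, …, X_m are independent random variables, each uniformly distributed on {0, 1, …, u−1} where u = ⌈0.87n⌉ and m ≥ n/3. Then for each v ∈ {0,1}, the probability that [∃ i, X_i = 0] (interpreted as outcome 0) is at least 1/4, and the probability that [∀ i ≤ n, X_i ≠ 0] (interpreted as outcome 1, with at most n variables) is at least 1/4, provided n ≥ 4. -/

import Mathlib

open MeasureTheory ProbabilityTheory

private lemma stmt18_u_ge (n u : ℕ) (hn : 4 ≤ n) (hu : u = ⌈(0.87 : ℝ) * n⌉₊) : 4 ≤ u := by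
  subst hu
  have h : (3 : ℕ) < ⌈(0.87 : ℝ) * n⌉₊ := by
    rw [Nat.lt_ceil]
    have : (4:ℝ) ≤ n := by exact_mod_cast hn
    nlinarith
  omega

private lemma stmt18_u_le (n u : ℕ) (hu : u = ⌈(0.87 : ℝ) * n⌉₊) : u ≤ n := by
  subst hu
  rw [Nat.ceil_le]
  have : (0:ℝ) ≤ n := Nat.cast_nonneg n
  nlinarith

private lemma stmt18_realB (n u m : ℕ) (hn : 4 ≤ n) (hu : u = ⌈(0.87 : ℝ) * n⌉₊)
    (hm : (n : ℝ) / 3 ≤ m) : (1 - 1/(u:ℝ))^m ≤ 3/4 := by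
  have hu4 := stmt18_u_ge n u hn hu
  have hun := stmt18_u_le n u hu
  have hupos : (0:ℝ) < u := by
    have : (4:ℝ) ≤ u := by exact_mod_cast hu4
    linarith
  have hp0 : (0:ℝ) ≤ 1 - 1/(u:ℝ) := by
    have : 1/(u:ℝ) ≤ 1/4 := by
      apply one_div_le_one_div_of_le <;> [norm_num; exact_mod_cast hu4]
    linarith
  have h1 : (1 - 1/(u:ℝ)) ≤ Real.exp (-(1/(u:ℝ))) := by
    have := Real.add_one_le_exp (-(1/(u:ℝ)))
    linarith
  have h2 : (1 - 1/(u:ℝ))^m ≤ Real.exp (-(1/(u:ℝ)))^m :=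
    pow_le_pow_left₀ hp0 h1 m
  have h3 : Real.exp (-(1/(u:ℝ)))^m = Real.exp (-(m/(u:ℝ))) := by
    rw [← Real.exp_nat_mul]
    ring_nf
  have hmu : (1:ℝ)/3 ≤ (m:ℝ)/(u:ℝ) := by
    have hun' : (u:ℝ) ≤ n := by exact_mod_cast hun
    rw [div_le_div_iff₀ (by norm_num) hupos]
    linarith
  have h4 : (4:ℝ)/3 ≤ Real.exp ((m:ℝ)/(u:ℝ)) := by
    have := Real.add_one_le_exp ((m:ℝ)/(u:ℝ))
    linarith
  have h5 : Real.exp (-(m/(u:ℝ))) ≤ 3/4 := by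
    rw [Real.exp_neg, inv_le_comm₀ (Real.exp_pos _) (by norm_num)]
    calc (3/4:ℝ)⁻¹ = 4/3 := by norm_num
    _ ≤ Real.exp ((m:ℝ)/(u:ℝ)) := h4
  calc (1 - 1/(u:ℝ))^m ≤ Real.exp (-(1/(u:ℝ)))^m := h2
    _ = Real.exp (-(m/(u:ℝ))) := h3
    _ ≤ 3/4 := h5

private lemma stmt18_realA (n u m : ℕ) (hn : 4 ≤ n) (hu : u = ⌈(0.87 : ℝ) * n⌉₊)
    (hm : m ≤ n) : (1/4 : ℝ) ≤ (1 - 1/(u:ℝ))^m := by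
  have hu4 := stmt18_u_ge n u hn hu
  have hupos : (0:ℝ) < u := by
    have : (4:ℝ) ≤ u := by exact_mod_cast hu4
    linarith
  have hp0 : (0:ℝ) ≤ 1 - 1/(u:ℝ) := by
    have : 1/(u:ℝ) ≤ 1/4 := by
      apply one_div_le_one_div_of_le <;> [norm_num; exact_mod_cast hu4]
    linarith
  have hp1 : 1 - 1/(u:ℝ) ≤ 1 := by
    have : (0:ℝ) ≤ 1/(u:ℝ) := by positivity
    linarith
  have key : (1/4 : ℝ) ≤ (1 - 1/(u:ℝ))^n := by
    rcases le_or_gt n 8 with h8 | h8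
    · -- small cases: n ∈ {4,...,8}
      clear hp0 hp1 hupos hu4 hm
      interval_cases n
      · have hue : u = 4 := by rw [hu, Nat.ceil_eq_iff (by norm_num)]; norm_num
        rw [hue]; norm_num
      · have hue : u = 5 := by rw [hu, Nat.ceil_eq_iff (by norm_num)]; norm_num
        rw [hue]; norm_num
      · have hue : u = 6 := by rw [hu, Nat.ceil_eq_iff (by norm_num)]; norm_num
        rw [hue]; norm_num
      · have hue : u = 7 := by rw [hu, Nat.ceil_eq_iff (by norm_num)]; norm_num
        rw [hue]; norm_num
      · have hue : u = 7 := by rw [hu, Nat.ceil_eq_iff (by norm_num)]; norm_num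
        rw [hue]; norm_num
    · -- n ≥ 9
      have hn9 : (9:ℝ) ≤ n := by exact_mod_cast h8
      have hulb : (0.87:ℝ) * n ≤ u := by rw [hu]; exact Nat.le_ceil _
      have h34 : (3:ℝ)/4 * n ≤ (u:ℝ) - 1 := by nlinarith
      have hu1pos : (0:ℝ) < (u:ℝ) - 1 := by nlinarith
      set y : ℝ := 1/((u:ℝ) - 1) with hy
      have hypos : 0 < y := by positivity
      have hppos : (0:ℝ) < 1 - 1/(u:ℝ) := by
        rw [sub_pos, div_lt_one hupos]; linarith
      have hexp : Real.exp (-y) ≤ 1 - 1/(u:ℝ) := by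
        have h1y : 1 + y ≤ Real.exp y := by
          have := Real.add_one_le_exp y; linarith
        rw [Real.exp_neg, inv_le_comm₀ (Real.exp_pos _) hppos]
        calc (1 - 1/(u:ℝ))⁻¹ = 1 + y := by
              rw [hy]; field_simp; ring
        _ ≤ Real.exp y := h1y
      have h2 : Real.exp (-y)^n ≤ (1 - 1/(u:ℝ))^n :=
        pow_le_pow_left₀ (Real.exp_nonneg _) hexp n
      have h3 : Real.exp (-y)^n = Real.exp (-((n:ℝ)*y)) := by
        rw [← Real.exp_nat_mul]; ring_nf
      have hs : (n:ℝ)*y ≤ 4/3 := by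
        rw [hy, mul_one_div, div_le_div_iff₀ hu1pos (by norm_num)]
        linarith
      have hexp43 : Real.exp (4/3:ℝ) < 4 := by
        have hc : Real.exp (4/3:ℝ)^3 = Real.exp 4 := by
          rw [← Real.exp_nat_mul]; norm_num
        have he4 : Real.exp (4:ℝ) < 64 := by
          have h1 : Real.exp (4:ℝ) = Real.exp 1 ^ 4 := by
            rw [← Real.exp_nat_mul]; norm_num
          have := Real.exp_one_lt_d9
          rw [h1]
          calc Real.exp 1 ^ 4 < 2.7182818286^4 :=
            pow_lt_pow_left₀ this (Real.exp_nonneg 1) (by norm_num)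
          _ < 64 := by norm_num
        have : Real.exp (4/3:ℝ)^3 < 4^3 := by rw [hc]; norm_num [he4]
        exact lt_of_pow_lt_pow_left₀ 3 (by norm_num) this
      have hle4 : Real.exp ((n:ℝ)*y) ≤ 4 :=
        le_of_lt (lt_of_le_of_lt (Real.exp_le_exp.mpr hs) hexp43)
      have : (1/4:ℝ) ≤ Real.exp (-((n:ℝ)*y)) := by
        rw [Real.exp_neg, ← one_div]
        exact one_div_le_one_div_of_le (Real.exp_pos _) hle4
      calc (1/4:ℝ) ≤ Real.exp (-((n:ℝ)*y)) := this
        _ = Real.exp (-y)^n := h3.symm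
        _ ≤ (1 - 1/(u:ℝ))^n := h2
  calc (1/4:ℝ) ≤ (1 - 1/(u:ℝ))^n := key
    _ ≤ (1 - 1/(u:ℝ))^m := pow_le_pow_of_le_one hp0 hp1 hm

theorem stmt_18 {Ω : Type*} [MeasurableSpace Ω] (μ : Measure Ω) [IsProbabilityMeasure μ]
    (n t : ℕ) (hnt : 3 * t + 1 ≤ n) (hn4 : 4 ≤ n)
    (u : ℕ) (hu : u = ⌈(0.87 : ℝ) * n⌉₊)
    (m : ℕ) (hm1 : (n : ℝ) / 3 ≤ m) (hm2 : m ≤ n)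
    (X : Fin m → Ω → ℕ) (hXmeas : ∀ i, Measurable (X i))
    (hindep : iIndepFun X μ)
    (hrange : ∀ i ω, X i ω < u)
    (hunif : ∀ i, ∀ k < u, μ (X i ⁻¹' {k}) = 1 / u) :
    (1 / 4 : ENNReal) ≤ μ {ω | ∃ i, X i ω = 0} ∧
    (1 / 4 : ENNReal) ≤ μ {ω | ∀ i, X i ω ≠ 0} := by
  have hu4 := stmt18_u_ge n u hn4 hu
  have hupos : 0 < u := by omega
  have hur : (0:ℝ) < u := by exact_mod_cast hupos
  set p : ℝ := 1 - 1/(u:ℝ) with hp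
  have hp0 : (0:ℝ) ≤ p := by
    rw [hp, sub_nonneg, div_le_one hur]
    exact_mod_cast Nat.one_le_iff_ne_zero.mpr (by omega)
  have hmeas0 : ∀ i, MeasurableSet (X i ⁻¹' {0}) :=
    fun i => hXmeas i (measurableSet_singleton 0)
  have hone : ∀ i : Fin m, μ (X i ⁻¹' {0}ᶜ) = ENNReal.ofReal p := by
    intro i
    rw [Set.preimage_compl, measure_compl (hmeas0 i) (measure_ne_top μ _), measure_univ,
      hunif i 0 hupos, hp, ENNReal.ofReal_sub _ (by positivity), ENNReal.ofReal_one,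
      one_div, one_div, ENNReal.ofReal_inv_of_pos hur, ENNReal.ofReal_natCast]
  have hAeq : {ω | ∀ i, X i ω ≠ 0} = ⋂ i, X i ⁻¹' {0}ᶜ := by
    ext ω; simp
  have hA : μ {ω | ∀ i, X i ω ≠ 0} = ENNReal.ofReal (p ^ m) := by
    rw [hAeq, hindep.meas_iInter (fun i => ⟨{0}ᶜ, (measurableSet_singleton 0).compl, rfl⟩)]
    simp_rw [hone]
    rw [Finset.prod_const, Finset.card_univ, Fintype.card_fin, ← ENNReal.ofReal_pow hp0]
  have hAmeas : MeasurableSet {ω | ∀ i, X i ω ≠ 0} := by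
    rw [hAeq]
    exact MeasurableSet.iInter (fun i => hXmeas i (measurableSet_singleton 0).compl)
  have hfourth : (1/4 : ENNReal) = ENNReal.ofReal (1/4) := by
    rw [ENNReal.ofReal_div_of_pos (by norm_num)]
    norm_num
  have hrA := stmt18_realA n u m hn4 hu hm2
  have hrB := stmt18_realB n u m hn4 hu hm1
  constructor
  · have hEeq : {ω | ∃ i, X i ω = 0} = {ω | ∀ i, X i ω ≠ 0}ᶜ := by
      ext ω; simp
    rw [hEeq, measure_compl hAmeas (measure_ne_top μ _), measure_univ, hA, hfourth,
      ← ENNReal.ofReal_one, ← ENNReal.ofReal_sub _ (by positivity)]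
    exact ENNReal.ofReal_le_ofReal (by linarith)
  · rw [hA, hfourth]
    exact ENNReal.ofReal_le_ofReal hrA
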